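/- Let (T,⪯,Σ,S,M) be an (S,M)-tree, let F ∈ M, let X ⊆ T, and suppose F is an envelope of X, i.e., there is Y ⊆ T with F[Y] = X. Then for every set of levels I ⊆ F̃[ω], F is also an envelope of Cl_I(X), the smallest superset of X that is closed under meets and parameter-closed over I. -/

import Mathlib

variable {T : Type*} [PartialOrder T] {A : Type*}

/-- The level of a node: the number of its strict predecessors. -/
noncomputable def lvl (a : T) : ℕ := {b : T | b < a}.ncard

/-- `(T, ≤, A, S)` is an S-tree: a countable finitely branching tree with finitely many
level-0 nodes, together with a partial successor operation `S` (modelled with `Option`)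
satisfying axioms (S1), (S2) and (S3). Here `a ⋖ q` means `q` is an immediate successor
of `a`. -/
structure IsSTree (S : T → List T → A → Option T) : Prop where
  countable : Countable T
  pred_finite : ∀ a : T, {b : T | b < a}.Finite
  pred_chain : ∀ a : T, IsChain (· ≤ ·) {b : T | b < a}
  finite_branching : ∀ a : T, {b : T | a ⋖ b}.Finite
  finite_roots : {a : T | lvl a = 0}.Finite
  s1_cov : ∀ (a : T) (p : List T) (c : A) (q : T), S a p c = some q → a ⋖ q
  s1_param : ∀ (a : T) (p : List T) (c : A) (q : T), S a p c = some q →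
    ∀ x ∈ p, lvl x + 1 ≤ lvl a
  s2 : ∀ (a a' : T) (p p' : List T) (c c' : A) (q : T),
    S a p c = some q → S a' p' c' = some q → a = a' ∧ p = p' ∧ c = c'
  s3 : ∀ a b : T, a ⋖ b → ∃ (p : List T) (c : A), S a p c = some b

/-- `F` is a shape-preserving function of the S-tree `(T, ≤, A, S)`: an injection that is
level-preserving, weakly `S`-preserving, and preserves the level-0 predecessor relation. -/
structure IsShapePres (S : T → List T → A → Option T) (F : T → T) : Prop where
  inj : Function.Injective F
  lvl_pres : ∀ a b : T, lvl a = lvl b → lvl (F a) = lvl (F b)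
  weak_S : ∀ (a : T) (p : List T) (c : A) (q : T), S a p c = some q →
    ∃ q' : T, S (F a) (p.map F) c = some q' ∧ q' ≤ F q
  root : ∀ a b : T, lvl a = 0 → a ≤ b → a ≤ F b

/-- `F` skips level `m`: `m` is not in the image of the induced level map `F̃`. -/
noncomputable def SkipsLevel (F : T → T) (m : ℕ) : Prop := ∀ a : T, lvl (F a) ≠ m

/-- `F` skips only level `m`: `F̃[ω] = ω \ {m}`, i.e. `F̃(ℓ) = ℓ` for `ℓ < m` and
`F̃(ℓ) = ℓ + 1` for `ℓ ≥ m`. -/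
noncomputable def SkipsOnly (F : T → T) (m : ℕ) : Prop :=
  ∀ a : T, lvl (F a) = if lvl a < m then lvl a else lvl a + 1

/-- `(T, ≤, A, S, M)` is an (S,M)-tree: an S-tree together with a set `M` of
shape-preserving functions satisfying (M1) `M` is a closed monoid, (M2) `M` admits
decompositions, and (M3) `M` is closed for duplication. -/
structure IsSMTree (S : T → List T → A → Option T) (M : Set (T → T)) : Prop where
  stree : IsSTree S
  shape : ∀ F ∈ M, IsShapePres S F
  -- (M1): `M` is a closed monoid
  m1_id : (id : T → T) ∈ M
  m1_comp : ∀ F ∈ M, ∀ G ∈ M, F ∘ G ∈ M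
  m1_closed : ∀ Fseq : ℕ → T → T, (∀ i, Fseq i ∈ M) →
    (∀ i : ℕ, ∀ a : T, lvl a ≤ i → Fseq i a = Fseq (i + 1) a) →
    ∃ F ∈ M, ∀ i : ℕ, ∀ a : T, lvl a ≤ i → F a = Fseq i a
  -- (M2): decompositions; `F̃(n)` is expressed via a witness `a₀` of level `n`
  m2 : ∀ F ∈ M, ∀ (n : ℕ) (a₀ : T), lvl a₀ = n → 0 < lvl (F a₀) →
    SkipsLevel F (lvl (F a₀) - 1) →
    ∃ F₁ ∈ M, ∃ F₂ ∈ M, SkipsOnly F₂ (lvl (F a₀) - 1) ∧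
      ∀ a : T, lvl a ≤ n → F₂ (F₁ a) = F a
  -- (M3): duplication functions `F^n_m`
  m3 : ∀ n m : ℕ, n < m → ∃ F ∈ M, SkipsOnly F m ∧
    ∀ (a b : T) (p : List T) (c : A) (q : T),
      lvl a = n → lvl b = m → S a p c = some q → q ≤ b → S b p c = some (F b)

/-- `m` is the meet of `a` and `b`: a `≤`-maximal common lower bound. -/
def IsMeetOf (m a b : T) : Prop :=
  m ≤ a ∧ m ≤ b ∧ ∀ c : T, m ≤ c → c ≤ a → c ≤ b → c = m

/-- `X` is meet-closed. -/
def MeetClosed (X : Set T) : Prop :=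
  ∀ a ∈ X, ∀ b ∈ X, ∀ m : T, IsMeetOf m a b → m ∈ X

/-- `X` is parameter-closed over `I`: for every `i ∈ I` and `a ∈ X` of level `> i`,
every parameter of the level-`(i+1)` predecessor of `a` belongs to `X`. -/
def ParamClosed (S : T → List T → A → Option T) (I : Set ℕ) (X : Set T) : Prop :=
  ∀ i ∈ I, ∀ a ∈ X, i < lvl a →
    ∀ (q q' : T) (p : List T) (c : A), q ≤ a → lvl q = i + 1 →
      S q' p c = some q → ∀ b ∈ p, b ∈ X

/-- `Cl_I(X)`: the smallest superset of `X` that is meet-closed and parameter-closed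
over `I`. -/
def Cl (S : T → List T → A → Option T) (I : Set ℕ) (X : Set T) : Set T :=
  ⋂₀ {Z : Set T | X ⊆ Z ∧ MeetClosed Z ∧ ParamClosed S I Z}

section Aux

variable {S : T → List T → A → Option T}

lemma lvl_lt_of_lt (hfin : ∀ a : T, {b : T | b < a}.Finite) {a b : T} (h : b < a) :
    lvl b < lvl a := by
  apply Set.ncard_lt_ncard _ (hfin a)
  constructor
  · intro c hc; exact lt_trans hc h
  · intro hsub
    exact absurd (hsub h) (lt_irrefl b)

lemma lvl_le_of_le (hfin : ∀ a : T, {b : T | b < a}.Finite) {a b : T} (h : b ≤ a) :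
    lvl b ≤ lvl a := by
  rcases eq_or_lt_of_le h with rfl | h
  · exact le_rfl
  · exact (lvl_lt_of_lt hfin h).le

lemma comparable_of_le (hST : IsSTree S) {a b c : T} (hb : b ≤ a) (hc : c ≤ a) :
    b ≤ c ∨ c ≤ b := by
  rcases eq_or_lt_of_le hb with rfl | hb'
  · exact Or.inr hc
  rcases eq_or_lt_of_le hc with rfl | hc'
  · exact Or.inl hb
  rcases eq_or_ne b c with rfl | hne
  · exact Or.inl le_rfl
  · exact hST.pred_chain a hb' hc' hne

lemma eq_of_le_le_lvl (hST : IsSTree S) {a b c : T} (hb : b ≤ a) (hc : c ≤ a)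
    (hlvl : lvl b = lvl c) : b = c := by
  rcases comparable_of_le hST hb hc with h | h
  · rcases eq_or_lt_of_le h with rfl | h'
    · rfl
    · exact absurd hlvl (ne_of_lt (lvl_lt_of_lt hST.pred_finite h'))
  · rcases eq_or_lt_of_le h with rfl | h'
    · rfl
    · exact absurd hlvl.symm (ne_of_lt (lvl_lt_of_lt hST.pred_finite h'))

lemma exists_pred (hST : IsSTree S) (a : T) {j : ℕ} (hj : j ≤ lvl a) :
    ∃ b : T, b ≤ a ∧ lvl b = j := by
  rcases eq_or_lt_of_le hj with rfl | hj'
  · exact ⟨a, le_rfl, rfl⟩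
  · have hfin := hST.pred_finite a
    have hinj : Set.InjOn lvl {b : T | b < a} := by
      intro b hb c hc hbc
      exact eq_of_le_le_lvl hST (le_of_lt hb) (le_of_lt hc) hbc
    have hsub : lvl '' {b : T | b < a} ⊆ Set.Iio (lvl a) := by
      rintro _ ⟨b, hb, rfl⟩
      exact lvl_lt_of_lt hST.pred_finite hb
    have hIio : (Set.Iio (lvl a)).ncard = lvl a := by
      have : (Set.Iio (lvl a)) = (Finset.range (lvl a) : Finset ℕ) := by
        ext x; simp
      rw [this, Set.ncard_coe_finset, Finset.card_range]
    have hcard : (lvl '' {b : T | b < a}).ncard = lvl a := by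
      rw [Set.ncard_image_of_injOn hinj]; rfl
    have heq : lvl '' {b : T | b < a} = Set.Iio (lvl a) := by
      apply Set.eq_of_subset_of_ncard_le hsub _ (Set.finite_Iio _)
      rw [hIio, hcard]
    have hjmem : j ∈ lvl '' {b : T | b < a} := by rw [heq]; exact hj'
    obtain ⟨b, hb, rfl⟩ := hjmem
    exact ⟨b, le_of_lt hb, rfl⟩

lemma lvl_covby (hST : IsSTree S) {a b : T} (h : a ⋖ b) : lvl b = lvl a + 1 := by
  have h1 : lvl a < lvl b := lvl_lt_of_lt hST.pred_finite h.lt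
  by_contra hne
  have h2 : lvl a + 1 < lvl b := by omega
  obtain ⟨c, hcb, hclvl⟩ := exists_pred hST b h2.le
  have hac : a ≤ c ∨ c ≤ a := comparable_of_le hST h.lt.le hcb
  have hac' : a < c := by
    rcases hac with h' | h'
    · rcases eq_or_lt_of_le h' with rfl | h''
      · omega
      · exact h''
    · have := lvl_le_of_le hST.pred_finite h'; omega
  have hcb' : c < b := by
    rcases eq_or_lt_of_le hcb with rfl | h'
    · omega
    · exact h'
  exact h.2 hac' hcb'

lemma exists_covby_le (hST : IsSTree S) {a b : T} (h : a < b) :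
    ∃ c : T, a ⋖ c ∧ c ≤ b := by
  have hlvl : lvl a < lvl b := lvl_lt_of_lt hST.pred_finite h
  obtain ⟨c, hcb, hclvl⟩ := exists_pred hST b (show lvl a + 1 ≤ lvl b by omega)
  have hac : a < c := by
    rcases comparable_of_le hST h.le hcb with h' | h'
    · rcases eq_or_lt_of_le h' with rfl | h''
      · omega
      · exact h''
    · have := lvl_le_of_le hST.pred_finite h'; omega
  refine ⟨c, ⟨hac, ?_⟩, hcb⟩
  intro x hax hxc
  have h1 := lvl_lt_of_lt hST.pred_finite hax
  have h2 := lvl_lt_of_lt hST.pred_finite hxc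
  omega

lemma F_mono (hST : IsSTree S) {F : T → T} (hSP : IsShapePres S F) :
    ∀ a b : T, a ≤ b → F a ≤ F b := by
  intro a b h
  rcases eq_or_lt_of_le h with rfl | h
  · exact le_rfl
  · obtain ⟨c, hac, hcb⟩ := exists_covby_le hST h
    obtain ⟨p, d, hs⟩ := hST.s3 _ _ hac
    obtain ⟨q', hq', hq'le⟩ := hSP.weak_S _ _ _ _ hs
    have h1 : F a ≤ F c := le_trans (hST.s1_cov _ _ _ _ hq').lt.le hq'le
    have h2 : F c ≤ F b := F_mono hST hSP c b hcb
    exact h1.trans h2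
termination_by a b _ => lvl b - lvl a
decreasing_by
  have h1 : lvl c = lvl a + 1 := lvl_covby hST hac
  have h2 : lvl c ≤ lvl b := lvl_le_of_le hST.pred_finite hcb
  have h3 : lvl a < lvl b := lvl_lt_of_lt hST.pred_finite h
  omega

lemma F_strict_mono (hST : IsSTree S) {F : T → T} (hSP : IsShapePres S F)
    {a b : T} (h : a < b) : F a < F b :=
  lt_of_le_of_ne (F_mono hST hSP a b h.le) (fun he => (ne_of_lt h) (hSP.inj he))

lemma lvl_F_mono (hST : IsSTree S) {F : T → T} (hSP : IsShapePres S F)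
    {a b : T} (h : lvl a ≤ lvl b) : lvl (F a) ≤ lvl (F b) := by
  obtain ⟨b', hb', hb'lvl⟩ := exists_pred hST b h
  have h1 : lvl (F b') = lvl (F a) := hSP.lvl_pres _ _ hb'lvl
  have h2 : F b' ≤ F b := F_mono hST hSP _ _ hb'
  have := lvl_le_of_le hST.pred_finite h2
  omega

lemma lvl_F_strict_mono (hST : IsSTree S) {F : T → T} (hSP : IsShapePres S F)
    {a b : T} (h : lvl a < lvl b) : lvl (F a) < lvl (F b) := by
  obtain ⟨b', hb', hb'lvl⟩ := exists_pred hST b h.le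
  have h1 : lvl (F b') = lvl (F a) := hSP.lvl_pres _ _ hb'lvl
  have hb'b : b' < b := by
    rcases eq_or_lt_of_le hb' with rfl | h'
    · omega
    · exact h'
  have h2 : F b' < F b := F_strict_mono hST hSP hb'b
  have := lvl_lt_of_lt hST.pred_finite h2
  omega

/-- Meets are preserved (in the reverse direction) by shape-preserving maps. -/
lemma meet_pull (hST : IsSTree S) {F : T → T} (hSP : IsShapePres S F)
    {a b m : T} (hm : IsMeetOf m (F a) (F b)) :
    ∃ m' : T, IsMeetOf m' a b ∧ F m' = m := by
  obtain ⟨hma, hmb, hmax⟩ := hm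
  -- step 1: common lower bound of a and b
  obtain ⟨r, hrm, hr0⟩ := exists_pred hST m (Nat.zero_le _)
  obtain ⟨ra, hra, hra0⟩ := exists_pred hST a (Nat.zero_le _)
  obtain ⟨rb, hrb, hrb0⟩ := exists_pred hST b (Nat.zero_le _)
  have hraF : ra ≤ F a := hSP.root _ _ hra0 hra
  have hrbF : rb ≤ F b := hSP.root _ _ hrb0 hrb
  have hreqa : r = ra := eq_of_le_le_lvl hST (hrm.trans hma) hraF (by rw [hr0, hra0])
  have hreqb : r = rb := eq_of_le_le_lvl hST (hrm.trans hmb) hrbF (by rw [hr0, hrb0])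
  -- step 2: meet of a and b exists
  have hCne : (({c : T | c ≤ a ∧ c ≤ b}) : Set T).Nonempty :=
    ⟨r, hreqa ▸ hra, hreqb ▸ hrb⟩
  have hCfin : ({c : T | c ≤ a ∧ c ≤ b} : Set T).Finite := by
    apply Set.Finite.subset ((hST.pred_finite a).insert a)
    intro c hc
    rcases eq_or_lt_of_le hc.1 with rfl | h'
    · exact Set.mem_insert _ _
    · exact Set.mem_insert_of_mem _ h'
  obtain ⟨m', hm'C, hm'max⟩ := Set.Finite.exists_maximalFor lvl _ hCfin hCne
  have hm'top : ∀ c ∈ ({c : T | c ≤ a ∧ c ≤ b} : Set T), c ≤ m' := by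
    intro c hc
    rcases comparable_of_le hST hc.1 hm'C.1 with h' | h'
    · exact h'
    · rcases eq_or_lt_of_le h' with rfl | h''
      · exact le_rfl
      · exfalso
        have hlt := lvl_lt_of_lt hST.pred_finite h''
        have := hm'max hc hlt.le
        omega
  have hmeet : IsMeetOf m' a b := by
    refine ⟨hm'C.1, hm'C.2, ?_⟩
    intro c hmc hca hcb
    exact le_antisymm (hm'top c ⟨hca, hcb⟩) hmc
  refine ⟨m', hmeet, ?_⟩
  -- step 3: F m' = m
  have hFm'a : F m' ≤ F a := F_mono hST hSP _ _ hm'C.1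
  have hFm'b : F m' ≤ F b := F_mono hST hSP _ _ hm'C.2
  rcases comparable_of_le hST hma hFm'a with hcmp | hcmp
  · exact hmax _ hcmp hFm'a hFm'b
  rcases eq_or_lt_of_le hcmp with he | hFm'm
  · exact he
  exfalso
  -- F m' < m; derive contradiction
  have hm'a : m' < a := by
    rcases eq_or_lt_of_le hm'C.1 with rfl | h'
    · exact absurd (lt_of_lt_of_le hFm'm hma) (lt_irrefl _)
    · exact h'
  have hm'b : m' < b := by
    rcases eq_or_lt_of_le hm'C.2 with rfl | h'
    · exact absurd (lt_of_lt_of_le hFm'm hmb) (lt_irrefl _)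
    · exact h'
  obtain ⟨a₁, ha₁cov, ha₁le⟩ := exists_covby_le hST hm'a
  obtain ⟨b₁, hb₁cov, hb₁le⟩ := exists_covby_le hST hm'b
  obtain ⟨p, c, hsa⟩ := hST.s3 _ _ ha₁cov
  obtain ⟨p', c', hsb⟩ := hST.s3 _ _ hb₁cov
  obtain ⟨qa, hqa, hqale⟩ := hSP.weak_S _ _ _ _ hsa
  obtain ⟨qb, hqb, hqble⟩ := hSP.weak_S _ _ _ _ hsb
  have hqalvl : lvl qa = lvl (F m') + 1 := lvl_covby hST (hST.s1_cov _ _ _ _ hqa)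
  have hqblvl : lvl qb = lvl (F m') + 1 := lvl_covby hST (hST.s1_cov _ _ _ _ hqb)
  -- qa and qb are both ≤ m
  have hlm : lvl (F m') + 1 ≤ lvl m := lvl_lt_of_lt hST.pred_finite hFm'm
  obtain ⟨q, hqm, hqlvl⟩ := exists_pred hST m hlm
  have hqaFa : qa ≤ F a := hqale.trans (F_mono hST hSP _ _ ha₁le)
  have hqbFb : qb ≤ F b := hqble.trans (F_mono hST hSP _ _ hb₁le)
  have hqqa : q = qa := eq_of_le_le_lvl hST (hqm.trans hma) hqaFa (by omega)
  have hqqb : q = qb := eq_of_le_le_lvl hST (hqm.trans hmb) hqbFb (by omega)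
  have hqab : qa = qb := hqqa ▸ hqqb
  subst hqab
  obtain ⟨_, hpeq, hceq⟩ := hST.s2 _ _ _ _ _ _ _ hqa hqb
  have hpp : p = p' := by
    have : Function.Injective (List.map F) := List.map_injective_iff.mpr hSP.inj
    exact this hpeq
  subst hpp; subst hceq
  have hab₁ : a₁ = b₁ := Option.some.inj (hsa.symm.trans hsb)
  subst hab₁
  have : a₁ ≤ m' := hm'top a₁ ⟨ha₁le, hb₁le⟩
  exact absurd (lt_of_lt_of_le ha₁cov.lt this) (lt_irrefl _)

end Aux

/-- in an (S,M)-tree, if `F ∈ M` is an envelope of `X` (i.e. `F[Y] = X` for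
some `Y`), then for every set of levels `I` contained in the image of the level map `F̃`,
`F` is also an envelope of `Cl_I(X)`. -/
theorem stmt_14 (S : T → List T → A → Option T) (M : Set (T → T))
    (h : IsSMTree S M) (F : T → T) (hF : F ∈ M)
    (X : Set T) (henv : ∃ Y : Set T, F '' Y = X)
    (I : Set ℕ) (hI : ∀ i ∈ I, ∃ a : T, lvl (F a) = i) :
    ∃ Y : Set T, F '' Y = Cl S I X := by
  classical
  obtain ⟨Y₀, hY₀⟩ := henv
  have hST : IsSTree S := h.stree
  have hSP : IsShapePres S F := h.shape F hF
  -- the pulled-back level set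
  set J : Set ℕ := {j : ℕ | ∃ x : T, lvl x = j ∧ lvl (F x) ∈ I} with hJ
  set C : Set T := Cl S J Y₀ with hC
  -- basic facts about Cl
  have hunivmem : ∀ (I' : Set ℕ) (W : Set T),
      W ∈ {Z : Set T | W ⊆ Z ∧ MeetClosed Z ∧ ParamClosed S I' Z} ∨ True := fun _ _ => Or.inr trivial
  have hCsub : Y₀ ⊆ C := by
    intro y hy
    intro Z hZ
    exact hZ.1 hy
  have hCmeet : MeetClosed C := by
    intro a ha b hb m hm Z hZ
    exact hZ.2.1 a (ha Z hZ) b (hb Z hZ) m hm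
  have hCparam : ParamClosed S J C := by
    intro i hi a ha hia q q' p c hqa hqlvl hs b hb Z hZ
    exact hZ.2.2 i hi a (ha Z hZ) hia q q' p c hqa hqlvl hs b hb
  -- the candidate closed superset of X inside the range of F
  set Z : Set T := F '' C with hZdef
  have hXZ : X ⊆ Z := by
    rw [← hY₀]
    exact Set.image_mono hCsub
  have hZmeet : MeetClosed Z := by
    rintro _ ⟨a, ha, rfl⟩ _ ⟨b, hb, rfl⟩ m hm
    obtain ⟨m', hm', rfl⟩ := meet_pull hST hSP hm
    exact ⟨m', hCmeet a ha b hb m' hm', rfl⟩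
  have hZparam : ParamClosed S I Z := by
    rintro i hi _ ⟨a, ha, rfl⟩ hia q q' p c hqa hqlvl hs b hb
    obtain ⟨x, hx⟩ := hI i hi
    have hjJ : lvl x ∈ J := ⟨x, rfl, hx ▸ hi⟩
    have hja : lvl x < lvl a := by
      by_contra hcon
      push_neg at hcon
      have := lvl_F_mono hST hSP hcon
      omega
    obtain ⟨a₀, ha₀le, ha₀lvl⟩ := exists_pred hST a hja.le
    obtain ⟨a₁, ha₁le, ha₁lvl⟩ := exists_pred hST a (show lvl x + 1 ≤ lvl a by omega)
    have hcov : a₀ ⋖ a₁ := by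
      have hlt : a₀ < a₁ := by
        rcases comparable_of_le hST ha₀le ha₁le with h' | h'
        · rcases eq_or_lt_of_le h' with rfl | h''
          · omega
          · exact h''
        · have := lvl_le_of_le hST.pred_finite h'; omega
      refine ⟨hlt, fun y hy1 hy2 => ?_⟩
      have h1 := lvl_lt_of_lt hST.pred_finite hy1
      have h2 := lvl_lt_of_lt hST.pred_finite hy2
      omega
    obtain ⟨p₀, c₀, hs₀⟩ := hST.s3 _ _ hcov
    obtain ⟨q₁, hq₁, hq₁le⟩ := hSP.weak_S _ _ _ _ hs₀
    have hq₁lvl : lvl q₁ = lvl (F a₀) + 1 := lvl_covby hST (hST.s1_cov _ _ _ _ hq₁)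
    have hFa₀lvl : lvl (F a₀) = i := by
      have := hSP.lvl_pres a₀ x ha₀lvl
      omega
    have hq₁a : q₁ ≤ F a := hq₁le.trans (F_mono hST hSP _ _ ha₁le)
    have hqq₁ : q = q₁ := eq_of_le_le_lvl hST hqa hq₁a (by omega)
    subst hqq₁
    obtain ⟨_, hpeq, _⟩ := hST.s2 _ _ _ _ _ _ _ hs hq₁
    subst hpeq
    obtain ⟨b₀, hb₀, rfl⟩ := List.mem_map.mp hb
    refine ⟨b₀, ?_, rfl⟩
    exact hCparam (lvl x) hjJ a ha (by omega) a₁ a₀ p₀ c₀ ha₁le (by omega) hs₀ b₀ hb₀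
  -- conclude
  have hClsub : Cl S I X ⊆ Z := Set.sInter_subset_of_mem ⟨hXZ, hZmeet, hZparam⟩
  refine ⟨F ⁻¹' (Cl S I X), ?_⟩
  rw [Set.image_preimage_eq_inter_range]
  apply Set.inter_eq_left.mpr
  intro z hz
  obtain ⟨w, _, rfl⟩ := hClsub hz
  exact ⟨w, rfl⟩
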